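/- Let w : ℕ → ℝ be discretely convex, nondecreasing, w(0) = 0, w(1) = 1, and w(j) > 0 for j ≥ 1. Let f : ℕ → ℝ with f(1) = 1 and f(j) ≥ 1 for all j ≥ 1. Let n ≥ 1, λ = w(n)/n, and suppose μ ≥ λ * j * f(j)/w(j) for all 1 ≤ j ≤ n. Then for all naturals a, b, x with a + x ≥ 1, b + x ≥ 1, a + x ≤ n, b + x ≤ n: μ ≥ w(b+x)/w(a+x) + λ*(a*f(a+x) - b*f(a+x+1))/w(a+x), where f(n+1) is interpreted as any value ≥ 1. -/

import Mathlib

theorem stmt_7 (w f : ℕ → ℝ) (n : ℕ) (lam mu : ℝ)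
    (h0 : w 0 = 0) (h1 : w 1 = 1)
    (hmono : ∀ j, w j ≤ w (j + 1))
    (hconv : ∀ j, 1 ≤ j → w (j + 1) + w (j - 1) ≥ 2 * w j)
    (hpos : ∀ j, 1 ≤ j → 0 < w j)
    (hf1 : f 1 = 1)
    (hf : ∀ j, 1 ≤ j → 1 ≤ f j)
    (hn : 1 ≤ n)
    (hlam : lam = w n / (n : ℝ))
    (hmu : ∀ j, 1 ≤ j → j ≤ n → mu ≥ lam * (j : ℝ) * f j / w j) :
    ∀ a b x : ℕ, 1 ≤ a + x → 1 ≤ b + x → a + x ≤ n → b + x ≤ n →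
      mu ≥ w (b + x) / w (a + x) +
        lam * ((a : ℝ) * f (a + x) - (b : ℝ) * f (a + x + 1)) / w (a + x) := by
  -- Lemma A: w j ≤ j * (w (j+1) - w j) for j ≥ 1
  have lemA : ∀ j, 1 ≤ j → w j ≤ (j : ℝ) * (w (j + 1) - w j) := by
    intro j hj
    induction j with
    | zero => omega
    | succ k ih =>
      rcases Nat.eq_or_lt_of_le hj with h | h
      · have hc := hconv 1 le_rfl
        simp only [show (1:ℕ) - 1 = 0 from rfl, h0, h1] at hc
        have : k = 0 := by omega
        subst this
        push_cast
        linarith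
      · have hk : 1 ≤ k := by omega
        have ihk := ih hk
        have hc := hconv (k + 1) (by omega)
        simp only [Nat.add_sub_cancel] at hc
        have hkc : (1 : ℝ) ≤ (k : ℝ) := by exact_mod_cast hk
        push_cast
        nlinarith [hc, ihk]
  -- Lemma C: for 1 ≤ t ≤ m, m * w t ≤ t * w m
  have lemC : ∀ (t m : ℕ), 1 ≤ t → t ≤ m → (m : ℝ) * w t ≤ (t : ℝ) * w m := by
    intro t m ht htm
    induction m, htm using Nat.le_induction with
    | base => exact le_refl _
    | succ m hm ih =>
      have hm1 : 1 ≤ m := by omega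
      have hA := lemA m hm1
      have hmc : (1 : ℝ) ≤ (m : ℝ) := by exact_mod_cast hm1
      have htc : (0 : ℝ) < (t : ℝ) := by exact_mod_cast ht
      push_cast
      nlinarith [ih, hA, hpos t ht]
  intro a b x hax hbx haxn hbxn
  have hws : 0 < w (a + x) := hpos _ hax
  have hwn : 0 < w n := hpos n hn
  have hnc : (0 : ℝ) < (n : ℝ) := by exact_mod_cast hn
  have hlampos : 0 < lam := by rw [hlam]; positivity
  have hwt : w (b + x) ≤ lam * ((b : ℝ) + (x : ℝ)) := by
    have := lemC (b + x) n hbx hbxn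
    rw [hlam]
    rw [div_mul_eq_mul_div, le_div_iff₀ hnc]
    push_cast at this ⊢
    nlinarith
  have hfs : 1 ≤ f (a + x) := hf _ hax
  have hfs1 : 1 ≤ f (a + x + 1) := hf _ (by omega)
  have hmus := hmu (a + x) hax haxn
  have key : w (b + x) + lam * ((a : ℝ) * f (a + x) - (b : ℝ) * f (a + x + 1))
      ≤ lam * ((a + x : ℕ) : ℝ) * f (a + x) := by
    push_cast
    nlinarith [mul_nonneg (mul_nonneg hlampos.le (Nat.cast_nonneg (α := ℝ) x))
        (sub_nonneg.2 hfs),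
      mul_nonneg (mul_nonneg hlampos.le (Nat.cast_nonneg (α := ℝ) b))
        (sub_nonneg.2 hfs1)]
  rw [ge_iff_le, ← add_div]
  calc (w (b + x) + lam * ((a : ℝ) * f (a + x) - (b : ℝ) * f (a + x + 1))) / w (a + x)
      ≤ lam * ((a + x : ℕ) : ℝ) * f (a + x) / w (a + x) :=
        by gcongr
    _ ≤ mu := hmus
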